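/- For any signed permutation π ∈ B_n and 1 ≤ k ≤ n, the generating function of the width-k type-B order polynomial is Σ_{p ≥ 0} Ω_B(π, k, p) x^p = x^{des_k^B(π)} / (1-x)^{n-k+2}. -/

import Mathlib

open Finset

private def cnt (P : ℕ → Prop) [DecidablePred P] (s : ℕ) : ℕ :=
  ((range (s + 1)).filter P).card

private lemma cnt_zero (P : ℕ → Prop) [DecidablePred P] :
    cnt P 0 = if P 0 then 1 else 0 := by
  rw [cnt, range_one, filter_singleton]
  split <;> simp

private lemma cnt_succ (P : ℕ → Prop) [DecidablePred P] (s : ℕ) :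
    cnt P (s + 1) = cnt P s + if P (s + 1) then 1 else 0 := by
  rw [cnt, cnt, range_add_one, filter_insert]
  by_cases h : P (s + 1)
  · rw [if_pos h, if_pos h, card_insert_of_notMem (by simp)]
  · rw [if_neg h, if_neg h]; omega

private lemma cnt_mono (P : ℕ → Prop) [DecidablePred P] {s t : ℕ} (h : s ≤ t) :
    cnt P s ≤ cnt P t :=
  Finset.card_le_card (Finset.filter_subset_filter _ (Finset.range_subset_range.2 (by omega)))

private lemma card_strictMono_fin (m M : ℕ) :
    Fintype.card {f : Fin m → Fin M // StrictMono f} = M.choose m := by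
  have e : {f : Fin m → Fin M // StrictMono f} ≃ {s : Finset (Fin M) // s.card = m} :=
  { toFun := fun f => ⟨Finset.univ.image f.1, by
      rw [Finset.card_image_of_injective _ f.2.injective, Finset.card_univ, Fintype.card_fin]⟩
    invFun := fun s => ⟨Finset.orderEmbOfFin s.1 s.2, (Finset.orderEmbOfFin s.1 s.2).strictMono⟩
    left_inv := fun f => Subtype.ext
      ((Finset.orderEmbOfFin_unique _
        (fun x => Finset.mem_image_of_mem _ (Finset.mem_univ x)) f.2).symm)
    right_inv := fun s => Subtype.ext (by
      have h := Finset.range_orderEmbOfFin s.1 s.2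
      rw [← Finset.coe_inj, Finset.coe_image, Finset.coe_univ, Set.image_univ, h]) }
  rw [Fintype.card_congr e, Fintype.card_finset_len, Fintype.card_fin]

private lemma card_chain (N p : ℕ) (P : ℕ → Prop) [DecidablePred P] :
    Fintype.card {g : Fin (N + 1) → Fin (p + 1) //
      (∀ a b : Fin (N + 1), a ≤ b → g a ≤ g b) ∧
      ∀ s : Fin (N + 1), P (s : ℕ) →
        (((s : ℕ) = 0 → (0 : ℕ) < g s) ∧
         (0 < (s : ℕ) →
           (g ⟨(s : ℕ) - 1, lt_of_le_of_lt (Nat.sub_le _ _) s.isLt⟩ : ℕ) < (g s : ℕ)))} =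
    if cnt P N ≤ p then (p - cnt P N + (N + 1)).choose (N + 1) else 0 := by
  set d := cnt P N with hd
  -- single-step inequality for chains
  have hstep : ∀ (g : Fin (N + 1) → Fin (p + 1)),
      (∀ a b : Fin (N + 1), a ≤ b → g a ≤ g b) →
      (∀ s : Fin (N + 1), P (s : ℕ) →
        (((s : ℕ) = 0 → (0 : ℕ) < g s) ∧
         (0 < (s : ℕ) →
           (g ⟨(s : ℕ) - 1, lt_of_le_of_lt (Nat.sub_le _ _) s.isLt⟩ : ℕ) < (g s : ℕ)))) →
      ∀ v (hv : v + 1 < N + 1) (hv' : v < N + 1),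
        (g ⟨v, hv'⟩ : ℕ) + (if P (v + 1) then 1 else 0) ≤ (g ⟨v + 1, hv⟩ : ℕ) := by
    intro g hmono hdesc v hv hv'
    by_cases hP : P (v + 1)
    · rw [if_pos hP]
      have h2 := (hdesc ⟨v + 1, hv⟩ hP).2 (Nat.succ_pos v)
      have h3 : (g ⟨v, hv'⟩ : ℕ) < (g ⟨v + 1, hv⟩ : ℕ) := h2
      omega
    · rw [if_neg hP]
      have h2 := hmono ⟨v, hv'⟩ ⟨v + 1, hv⟩ (by simp [Fin.le_def])
      have h3 : (g ⟨v, hv'⟩ : ℕ) ≤ (g ⟨v + 1, hv⟩ : ℕ) := h2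
      omega
  -- the key two-point inequality
  have key : ∀ (g : Fin (N + 1) → Fin (p + 1)),
      (∀ a b : Fin (N + 1), a ≤ b → g a ≤ g b) →
      (∀ s : Fin (N + 1), P (s : ℕ) →
        (((s : ℕ) = 0 → (0 : ℕ) < g s) ∧
         (0 < (s : ℕ) →
           (g ⟨(s : ℕ) - 1, lt_of_le_of_lt (Nat.sub_le _ _) s.isLt⟩ : ℕ) < (g s : ℕ)))) →
      ∀ vt (ht : vt < N + 1) vs (hs : vs ≤ vt) (hs' : vs < N + 1),
        (g ⟨vs, hs'⟩ : ℕ) + cnt P vt ≤ (g ⟨vt, ht⟩ : ℕ) + cnt P vs := by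
    intro g hmono hdesc vt
    induction vt with
    | zero =>
      intro ht vs hs hs'
      have hvs : vs = 0 := by omega
      subst hvs
      have he : (g ⟨0, hs'⟩ : ℕ) = (g ⟨0, ht⟩ : ℕ) := rfl
      omega
    | succ vt ih =>
      intro ht vs hs hs'
      by_cases hc : vs = vt + 1
      · subst hc
        have he : (g ⟨vt + 1, hs'⟩ : ℕ) = (g ⟨vt + 1, ht⟩ : ℕ) := rfl
        omega
      · have ht' : vt < N + 1 := by omega
        have h1 := ih ht' vs (by omega) hs'
        have h2 := hstep g hmono hdesc vt ht ht'
        have h3 := cnt_succ P vt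
        by_cases hP : P (vt + 1)
        · rw [if_pos hP] at h2 h3; omega
        · rw [if_neg hP] at h2 h3; omega
  -- lower bound on chain values
  have glb : ∀ (g : Fin (N + 1) → Fin (p + 1)),
      (∀ a b : Fin (N + 1), a ≤ b → g a ≤ g b) →
      (∀ s : Fin (N + 1), P (s : ℕ) →
        (((s : ℕ) = 0 → (0 : ℕ) < g s) ∧
         (0 < (s : ℕ) →
           (g ⟨(s : ℕ) - 1, lt_of_le_of_lt (Nat.sub_le _ _) s.isLt⟩ : ℕ) < (g s : ℕ)))) →
      ∀ v (hv : v < N + 1), cnt P v ≤ (g ⟨v, hv⟩ : ℕ) := by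
    intro g hmono hdesc v hv
    have hz : (0 : ℕ) < N + 1 := Nat.succ_pos N
    have h1 := key g hmono hdesc v hv 0 (Nat.zero_le v) hz
    have h2 : cnt P 0 ≤ (g ⟨0, hz⟩ : ℕ) := by
      rw [cnt_zero]
      by_cases hP : P 0
      · rw [if_pos hP]
        exact (hdesc ⟨0, hz⟩ hP).1 rfl
      · rw [if_neg hP]; omega
    omega
  -- upper bound on chain values
  have gub : ∀ (g : Fin (N + 1) → Fin (p + 1)),
      (∀ a b : Fin (N + 1), a ≤ b → g a ≤ g b) →
      (∀ s : Fin (N + 1), P (s : ℕ) →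
        (((s : ℕ) = 0 → (0 : ℕ) < g s) ∧
         (0 < (s : ℕ) →
           (g ⟨(s : ℕ) - 1, lt_of_le_of_lt (Nat.sub_le _ _) s.isLt⟩ : ℕ) < (g s : ℕ)))) →
      ∀ v (hv : v < N + 1), (g ⟨v, hv⟩ : ℕ) + d ≤ p + cnt P v := by
    intro g hmono hdesc v hv
    have hN : N < N + 1 := Nat.lt_succ_self N
    have h1 := key g hmono hdesc N hN v (by omega) hv
    have h2 : (g ⟨N, hN⟩ : ℕ) ≤ p := Nat.lt_succ_iff.mp (g ⟨N, hN⟩).isLt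
    omega
  by_cases hpd : d ≤ p
  · rw [if_pos hpd]
    -- auxiliary facts on strictly monotone maps
    have aux1 : ∀ (f : Fin (N + 1) → Fin (p - d + N + 1)), StrictMono f →
        ∀ v (hv : v < N + 1), v ≤ (f ⟨v, hv⟩ : ℕ) := by
      intro f hf v
      induction v with
      | zero => intro hv; exact Nat.zero_le _
      | succ v ih =>
        intro hv
        have hv' : v < N + 1 := by omega
        have h1 := ih hv'
        have h2 : f ⟨v, hv'⟩ < f ⟨v + 1, hv⟩ := hf (by simp [Fin.lt_def])
        have h3 : (f ⟨v, hv'⟩ : ℕ) < (f ⟨v + 1, hv⟩ : ℕ) := h2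
        omega
    have aux2 : ∀ (f : Fin (N + 1) → Fin (p - d + N + 1)), StrictMono f →
        ∀ vt (ht : vt < N + 1) vs (hs : vs ≤ vt) (hs' : vs < N + 1),
          (f ⟨vs, hs'⟩ : ℕ) + (vt - vs) ≤ (f ⟨vt, ht⟩ : ℕ) := by
      intro f hf vt
      induction vt with
      | zero =>
        intro ht vs hs hs'
        have hvs : vs = 0 := by omega
        subst hvs
        have he : (f ⟨0, hs'⟩ : ℕ) = (f ⟨0, ht⟩ : ℕ) := rfl
        omega
      | succ vt ih =>
        intro ht vs hs hs'
        by_cases hc : vs = vt + 1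
        · subst hc
          have he : (f ⟨vt + 1, hs'⟩ : ℕ) = (f ⟨vt + 1, ht⟩ : ℕ) := rfl
          omega
        · have ht' : vt < N + 1 := by omega
          have h1 := ih ht' vs (by omega) hs'
          have h2 : (f ⟨vt, ht'⟩ : ℕ) < (f ⟨vt + 1, ht⟩ : ℕ) := hf (by simp [Fin.lt_def])
          omega
    have E : {g : Fin (N + 1) → Fin (p + 1) //
        (∀ a b : Fin (N + 1), a ≤ b → g a ≤ g b) ∧
        ∀ s : Fin (N + 1), P (s : ℕ) →
          (((s : ℕ) = 0 → (0 : ℕ) < g s) ∧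
           (0 < (s : ℕ) →
             (g ⟨(s : ℕ) - 1, lt_of_le_of_lt (Nat.sub_le _ _) s.isLt⟩ : ℕ) < (g s : ℕ)))} ≃
        {f : Fin (N + 1) → Fin (p - d + N + 1) // StrictMono f} :=
    { toFun := fun g => ⟨fun s =>
        ⟨(g.1 ⟨(s : ℕ), s.isLt⟩ : ℕ) - cnt P (s : ℕ) + (s : ℕ), by
          have h1 := glb g.1 g.2.1 g.2.2 (s : ℕ) s.isLt
          have h2 := gub g.1 g.2.1 g.2.2 (s : ℕ) s.isLt
          have h3 : (s : ℕ) < N + 1 := s.isLt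
          omega⟩, by
        intro a b hab
        have hab' : (a : ℕ) < (b : ℕ) := hab
        show (g.1 ⟨(a : ℕ), a.isLt⟩ : ℕ) - cnt P (a : ℕ) + (a : ℕ) <
          (g.1 ⟨(b : ℕ), b.isLt⟩ : ℕ) - cnt P (b : ℕ) + (b : ℕ)
        have h1 := key g.1 g.2.1 g.2.2 (b : ℕ) b.isLt (a : ℕ) (by omega) a.isLt
        have h2 := glb g.1 g.2.1 g.2.2 (a : ℕ) a.isLt
        have h3 := glb g.1 g.2.1 g.2.2 (b : ℕ) b.isLt
        omega⟩
      invFun := fun f => ⟨fun s =>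
        ⟨(f.1 ⟨(s : ℕ), s.isLt⟩ : ℕ) - (s : ℕ) + cnt P (s : ℕ), by
          have h1 := aux1 f.1 f.2 (s : ℕ) s.isLt
          have hN : N < N + 1 := Nat.lt_succ_self N
          have h2 := aux2 f.1 f.2 N hN (s : ℕ) (by omega) s.isLt
          have h3 : (f.1 ⟨N, hN⟩ : ℕ) < p - d + N + 1 := (f.1 ⟨N, hN⟩).isLt
          have h4 : cnt P (s : ℕ) ≤ cnt P N := cnt_mono P (by omega)
          have h5 : (s : ℕ) < N + 1 := s.isLt
          omega⟩, by
        constructor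
        · intro a b hab
          have hab' : (a : ℕ) ≤ (b : ℕ) := hab
          show (f.1 ⟨(a : ℕ), a.isLt⟩ : ℕ) - (a : ℕ) + cnt P (a : ℕ) ≤
            (f.1 ⟨(b : ℕ), b.isLt⟩ : ℕ) - (b : ℕ) + cnt P (b : ℕ)
          have h1 := aux2 f.1 f.2 (b : ℕ) b.isLt (a : ℕ) (by omega) a.isLt
          have h2 : cnt P (a : ℕ) ≤ cnt P (b : ℕ) := cnt_mono P (by omega)
          have h3 := aux1 f.1 f.2 (a : ℕ) a.isLt
          omega
        · intro s hPs
          constructor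
          · intro hs0
            show (0 : ℕ) < (f.1 ⟨(s : ℕ), s.isLt⟩ : ℕ) - (s : ℕ) + cnt P (s : ℕ)
            have h1 := aux1 f.1 f.2 (s : ℕ) s.isLt
            have h2 : 1 ≤ cnt P (s : ℕ) := by
              rw [hs0, cnt_zero, if_pos (hs0 ▸ hPs)]
            omega
          · intro hspos
            have hm1 : (s : ℕ) - 1 < N + 1 := by omega
            show (f.1 ⟨(s : ℕ) - 1, hm1⟩ : ℕ) - ((s : ℕ) - 1) + cnt P ((s : ℕ) - 1) <
              (f.1 ⟨(s : ℕ), s.isLt⟩ : ℕ) - (s : ℕ) + cnt P (s : ℕ)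
            have h1 := aux2 f.1 f.2 (s : ℕ) s.isLt ((s : ℕ) - 1) (by omega) hm1
            have h2 : cnt P (s : ℕ) = cnt P ((s : ℕ) - 1) + 1 := by
              obtain ⟨v, hv⟩ : ∃ v, (s : ℕ) = v + 1 := ⟨(s : ℕ) - 1, by omega⟩
              rw [hv, cnt_succ, if_pos (hv ▸ hPs)]
              norm_num
            have h3 := aux1 f.1 f.2 ((s : ℕ) - 1) hm1
            have h4 := aux1 f.1 f.2 (s : ℕ) s.isLt
            omega⟩
      left_inv := fun g => Subtype.ext (funext fun s => Fin.ext (by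
        have h2 := glb g.1 g.2.1 g.2.2 (s : ℕ) s.isLt
        show ((g.1 ⟨(s : ℕ), s.isLt⟩ : ℕ) - cnt P (s : ℕ) + (s : ℕ)) - (s : ℕ) + cnt P (s : ℕ) =
          (g.1 ⟨(s : ℕ), s.isLt⟩ : ℕ)
        omega))
      right_inv := fun f => Subtype.ext (funext fun s => Fin.ext (by
        have h1 := aux1 f.1 f.2 (s : ℕ) s.isLt
        show ((f.1 ⟨(s : ℕ), s.isLt⟩ : ℕ) - (s : ℕ) + cnt P (s : ℕ)) - cnt P (s : ℕ) + (s : ℕ) =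
          (f.1 ⟨(s : ℕ), s.isLt⟩ : ℕ)
        omega)) }
    rw [Fintype.card_congr E, card_strictMono_fin]
    congr 1
  · rw [if_neg hpd]
    have hN : N < N + 1 := Nat.lt_succ_self N
    have : IsEmpty {g : Fin (N + 1) → Fin (p + 1) //
        (∀ a b : Fin (N + 1), a ≤ b → g a ≤ g b) ∧
        ∀ s : Fin (N + 1), P (s : ℕ) →
          (((s : ℕ) = 0 → (0 : ℕ) < g s) ∧
           (0 < (s : ℕ) →
             (g ⟨(s : ℕ) - 1, lt_of_le_of_lt (Nat.sub_le _ _) s.isLt⟩ : ℕ) < (g s : ℕ)))} := by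
      constructor
      rintro ⟨g, hmono, hdesc⟩
      have h1 := glb g hmono hdesc N hN
      have h2 : (g ⟨N, hN⟩ : ℕ) ≤ p := Nat.lt_succ_iff.mp (g ⟨N, hN⟩).isLt
      omega
    exact Fintype.card_eq_zero
def bval (n : ℕ) (σ : Equiv.Perm (Fin n)) (ε : Fin n → Bool) : ℤ → ℤ := fun i =>
  if h : 1 ≤ i.natAbs ∧ i.natAbs ≤ n then
    (Int.sign i) *
      (if ε ⟨i.natAbs - 1, by omega⟩ then -((((σ ⟨i.natAbs - 1, by omega⟩ : Fin n) : ℕ) : ℤ) + 1)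
       else (((σ ⟨i.natAbs - 1, by omega⟩ : Fin n) : ℕ) : ℤ) + 1)
  else 0

/-- width-`k` type-B descent number: `#{0 ≤ i ≤ n-k : π(i) > π(i+k)}`, `π(0)=0`. -/
def desB (n k : ℕ) (π : ℤ → ℤ) : ℕ :=
  ((range (n - k + 1)).filter fun i : ℕ => π i > π ((i : ℤ) + k)).card

/-- width-`k` type-A descent number: `#{1 ≤ i ≤ n-k : π(i) > π(i+k)}`. -/
def desA (n k : ℕ) (π : ℤ → ℤ) : ℕ :=
  ((Icc 1 (n - k)).filter fun i : ℕ => π i > π ((i : ℤ) + k)).card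

/-- width-`k` negative descent number: `#{1 ≤ i ≤ n-k : π(-i) > π(i+k)}`. -/
def ndesB (n k : ℕ) (π : ℤ → ℤ) : ℕ :=
  ((Icc 1 (n - k)).filter fun i : ℕ => π (-(i : ℤ)) > π ((i : ℤ) + k)).card

/-- width-`k` inversion number: pairs `i < j` in `[n]` with `j - i` a positive multiple of `k`
and `π(i) > π(j)`. -/
def invAk (n k : ℕ) (π : ℤ → ℤ) : ℕ :=
  (((Icc 1 n) ×ˢ (Icc 1 n)).filter fun p : ℕ × ℕ =>
    p.1 < p.2 ∧ k ∣ (p.2 - p.1) ∧ π p.1 > π p.2).card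

/-- width-`k` negative-entry statistic: `#{1 ≤ i ≤ ⌊n/k⌋ : π(ik) < 0}`. -/
def negk (n k : ℕ) (π : ℤ → ℤ) : ℕ :=
  ((Icc 1 (n / k)).filter fun i : ℕ => π ((i : ℤ) * k) < 0).card

/-- width-`k` negative-sum-pair statistic. -/
def nspk (n k : ℕ) (π : ℤ → ℤ) : ℕ :=
  (((Icc 1 n) ×ˢ (Icc 1 n)).filter fun p : ℕ × ℕ =>
    p.1 < p.2 ∧ k ∣ (p.2 - p.1) ∧ π p.1 + π p.2 < 0).card

/-- width-`k` type-B inversion number. -/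
def invBk (n k : ℕ) (π : ℤ → ℤ) : ℕ := invAk n k π + negk n k π + nspk n k π

/-- The width-`k` type-B order polynomial `Ω_B(π,k,p)`: the number of chains
`0 ≤ g_1 ≤ … ≤ g_{n-k+1} ≤ p` with a strict increase at step `s` (and `0 < g_1` for `s = 0`)
precisely when `s ∈ {0,…,n-k}` is a width-`k` type-B descent of `π`. -/
def OmegaB (n k p : ℕ) (π : ℤ → ℤ) : ℕ :=
  Fintype.card {g : Fin (n - k + 1) → Fin (p + 1) //
    (∀ a b : Fin (n - k + 1), a ≤ b → g a ≤ g b) ∧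
    ∀ s : Fin (n - k + 1), π (s : ℕ) > π (((s : ℕ) : ℤ) + k) →
      (((s : ℕ) = 0 → (0 : ℕ) < g s) ∧
       (0 < (s : ℕ) →
         (g ⟨(s : ℕ) - 1, lt_of_le_of_lt (Nat.sub_le _ _) s.isLt⟩ : ℕ) < (g s : ℕ)))}

/-- Theorem 20: `Σ_{p ≥ 0} Ω_B(π,k,p) x^p = x^{des_k^B(π)}/(1-x)^{n-k+2}`,
as an identity of formal power series (denominator cleared). -/
private lemma OmegaB_eq (n k p : ℕ) (π : ℤ → ℤ) :
    OmegaB n k p π =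
      if desB n k π ≤ p then (p - desB n k π + (n - k + 1)).choose (n - k + 1) else 0 := by
  have h1 : desB n k π = cnt (fun i : ℕ => π i > π ((i : ℤ) + k)) (n - k) := rfl
  rw [h1]
  have h2 := card_chain (n - k) p (fun i : ℕ => π i > π ((i : ℤ) + k))
  rw [OmegaB]
  exact h2

theorem stmt12 (n k : ℕ) (hk : 1 ≤ k) (hkn : k ≤ n)
    (σ : Equiv.Perm (Fin n)) (ε : Fin n → Bool) :
    PowerSeries.mk (fun p => (OmegaB n k p (bval n σ ε) : ℤ)) *
        (1 - PowerSeries.X) ^ (n - k + 2) =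
      PowerSeries.X ^ desB n k (bval n σ ε) := by
  set π := bval n σ ε
  set d := desB n k π with hd
  have h1 : (PowerSeries.mk (fun p => (OmegaB n k p π : ℤ))) =
      PowerSeries.X ^ d *
        PowerSeries.mk (fun q => ((Nat.choose (n - k + 1 + q) (n - k + 1) : ℕ) : ℤ)) := by
    ext p
    rw [PowerSeries.coeff_mk, PowerSeries.coeff_X_pow_mul', OmegaB_eq, ← hd]
    split
    · rw [PowerSeries.coeff_mk]
      norm_cast
      congr 1
      omega
    · rfl
  have h2 : n - k + 2 = (n - k + 1) + 1 := rfl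
  rw [h1, h2, mul_assoc, PowerSeries.mk_add_choose_mul_one_sub_pow_eq_one, mul_one]
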